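/- The dimension function H_G is constant on each set F(η), and for every x ∈ Q_G and every ε > 0 the function H_G attains all its possible values already on Q_G ∩ (x − ε, x + ε); that is, H_G(Q_G ∩ (x − ε, x + ε)) = H_G(Q_G) as sets of values. -/

import Mathlib

open Real Filter

/-- The Gauss map `T x = 1/x - ⌊1/x⌋`. -/
noncomputable def gaussT (x : ℝ) : ℝ := x⁻¹ - ⌊x⁻¹⌋

/-- The `k+1`-st digit of `x` in the continued fraction expansion: `d_{k+1}(x) = ⌊1/T^k x⌋`. -/
noncomputable def cfDigit (k : ℕ) (x : ℝ) : ℤ := ⌊(gaussT^[k] x)⁻¹⌋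

/-- The set `F(η)` of `η`-quasinormal numbers for the continued fraction expansion. -/
def cfFreqSet (η : ℕ+ → ℝ) : Set ℝ :=
  {x | x ∈ Set.Ioo (0 : ℝ) 1 ∧ Irrational x ∧ ∀ i : ℕ+,
    Tendsto (fun n => (((Finset.range n).filter
        (fun k => cfDigit k x = ((i : ℕ) : ℤ))).card : ℝ) / n) atTop (nhds (η i))}

/-- An infinite stochastic vector with positive entries and finite entropy sum. -/
def cfStochastic (η : ℕ+ → ℝ) : Prop :=
  (∀ i, 0 < η i) ∧ Summable η ∧ (∑' i, η i = 1) ∧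
    Summable (fun i => η i * |Real.log (η i)|)

def Nice (x : ℝ) : Prop := x ∈ Set.Ioo (0:ℝ) 1 ∧ Irrational x

noncomputable def gfun (a : ℤ) (w : ℝ) : ℝ := ((a : ℝ) + w)⁻¹

lemma nice_inv_gt (x : ℝ) (hx : Nice x) : 1 < x⁻¹ :=
  (one_lt_inv₀ hx.1.1).2 hx.1.2

lemma nice_digit0 (x : ℝ) (hx : Nice x) : 1 ≤ cfDigit 0 x := by
  have := nice_inv_gt x hx
  simp only [cfDigit, Function.iterate_zero_apply]
  exact Int.le_floor.2 (by exact_mod_cast this.le)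

lemma nice_gauss (x : ℝ) (hx : Nice x) : Nice (gaussT x) := by
  have hinv : Irrational x⁻¹ := hx.2.inv
  have hfr : Irrational (gaussT x) := by
    simpa [gaussT, sub_eq_add_neg, add_comm] using hinv.sub_intCast ⌊x⁻¹⌋
  have hne : gaussT x ≠ 0 := by
    simp only [gaussT, sub_ne_zero]
    exact hinv.ne_int ⌊x⁻¹⌋
  refine ⟨⟨?_, ?_⟩, hfr⟩
  · have h0 : (0:ℝ) ≤ x⁻¹ - ⌊x⁻¹⌋ := by
      have := Int.floor_le x⁻¹; linarith
    exact lt_of_le_of_ne h0 (Ne.symm hne)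
  · have := Int.lt_floor_add_one x⁻¹
    simp only [gaussT]; linarith

lemma nice_gauss_iter (x : ℝ) (hx : Nice x) (k : ℕ) : Nice (gaussT^[k] x) := by
  induction k with
  | zero => simpa using hx
  | succ n ih => rw [Function.iterate_succ_apply']; exact nice_gauss _ ih

lemma nice_digit (x : ℝ) (hx : Nice x) (k : ℕ) : 1 ≤ cfDigit k x := by
  have := nice_digit0 _ (nice_gauss_iter x hx k)
  simpa [cfDigit] using this

lemma gfun_nice (a : ℤ) (ha : 1 ≤ a) (w : ℝ) (hw : Nice w) : Nice (gfun a w) := by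
  have h1 : (1:ℝ) ≤ (a:ℝ) := by exact_mod_cast ha
  have hpos : (0:ℝ) < (a:ℝ) + w := by linarith [hw.1.1]
  refine ⟨⟨inv_pos.2 hpos, ?_⟩, ?_⟩
  · exact (inv_lt_one₀ hpos).2 (by linarith [hw.1.1])
  · exact (hw.2.intCast_add a).inv

lemma gaussT_gfun (a : ℤ) (ha : 1 ≤ a) (w : ℝ) (hw : Nice w) : gaussT (gfun a w) = w := by
  have h1 : (1:ℝ) ≤ (a:ℝ) := by exact_mod_cast ha
  have hpos : (0:ℝ) < (a:ℝ) + w := by linarith [hw.1.1]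
  have hinv : (gfun a w)⁻¹ = (a:ℝ) + w := by
    simp [gfun, inv_inv]
  have hfl : ⌊(a:ℝ) + w⌋ = a := by
    rw [Int.floor_intCast_add, Int.floor_eq_zero_iff.2 ⟨hw.1.1.le, hw.1.2⟩, add_zero]
  simp [gaussT, hinv, hfl]

lemma gfun_recover (x : ℝ) (hx : Nice x) : gfun (cfDigit 0 x) (gaussT x) = x := by
  have hne : x ≠ 0 := ne_of_gt hx.1.1
  simp [gfun, gaussT, cfDigit, inv_inv, hne]

lemma two_step_contract (a b : ℤ) (ha : 1 ≤ a) (hb : 1 ≤ b) (U V : ℝ)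
    (hU : U ∈ Set.Ioo (0:ℝ) 1) (hV : V ∈ Set.Ioo (0:ℝ) 1) :
    |gfun a (gfun b U) - gfun a (gfun b V)| ≤ |U - V| / 2 := by
  have ha' : (1:ℝ) ≤ (a:ℝ) := by exact_mod_cast ha
  have hb' : (1:ℝ) ≤ (b:ℝ) := by exact_mod_cast hb
  have hbU : (0:ℝ) < (b:ℝ) + U := by linarith [hU.1]
  have hbV : (0:ℝ) < (b:ℝ) + V := by linarith [hV.1]
  set D1 : ℝ := ((b:ℝ) + U) * ((a:ℝ) + ((b:ℝ)+U)⁻¹) with hD1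
  set D2 : ℝ := ((b:ℝ) + V) * ((a:ℝ) + ((b:ℝ)+V)⁻¹) with hD2
  have hD1v : D1 = ((b:ℝ)+U) * a + 1 := by
    rw [hD1, mul_add, mul_inv_cancel₀ (ne_of_gt hbU)]
  have hD2v : D2 = ((b:ℝ)+V) * a + 1 := by
    rw [hD2, mul_add, mul_inv_cancel₀ (ne_of_gt hbV)]
  have hD1ge : 2 ≤ D1 := by rw [hD1v]; nlinarith [hU.1]
  have hD2ge : 2 ≤ D2 := by rw [hD2v]; nlinarith [hV.1]
  have hD1pos : 0 < D1 := by linarith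
  have hD2pos : 0 < D2 := by linarith
  have haU : (0:ℝ) < (a:ℝ) + ((b:ℝ)+U)⁻¹ := by positivity
  have haV : (0:ℝ) < (a:ℝ) + ((b:ℝ)+V)⁻¹ := by positivity
  have key : gfun a (gfun b U) - gfun a (gfun b V) = (U - V) / (D1 * D2) := by
    simp only [gfun, hD1, hD2]
    rw [eq_div_iff (by positivity)]
    field_simp
    ring
  rw [key, abs_div, abs_of_pos (mul_pos hD1pos hD2pos)]
  exact div_le_div_of_nonneg_left (abs_nonneg _) (by norm_num) (by nlinarith)
noncomputable def pc : ℕ → ℝ → ℝ → ℝ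
  | 0, _, w => w
  | (m+1), x, w => gfun (cfDigit 0 x) (pc m (gaussT x) w)

lemma pc_nice (m : ℕ) (x : ℝ) (hx : Nice x) (w : ℝ) (hw : Nice w) :
    Nice (pc m x w) := by
  induction m generalizing x with
  | zero => exact hw
  | succ n ih =>
      exact gfun_nice _ (nice_digit0 x hx) _ (ih (gaussT x) (nice_gauss x hx))

lemma pc_recover (m : ℕ) (x : ℝ) (hx : Nice x) : pc m x (gaussT^[m] x) = x := by
  induction m generalizing x with
  | zero => rfl
  | succ n ih =>
      show gfun (cfDigit 0 x) (pc n (gaussT x) (gaussT^[n+1] x)) = x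
      rw [Function.iterate_succ_apply, ih (gaussT x) (nice_gauss x hx)]
      exact gfun_recover x hx

lemma pc_iterate (m : ℕ) (x : ℝ) (hx : Nice x) (w : ℝ) (hw : Nice w) :
    gaussT^[m] (pc m x w) = w := by
  induction m generalizing x with
  | zero => rfl
  | succ n ih =>
      rw [Function.iterate_succ_apply]
      show gaussT^[n] (gaussT (gfun (cfDigit 0 x) (pc n (gaussT x) w))) = w
      rw [gaussT_gfun _ (nice_digit0 x hx) _ (pc_nice n (gaussT x) (nice_gauss x hx) w hw)]
      exact ih (gaussT x) (nice_gauss x hx)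

lemma pc_digit (m k : ℕ) (x : ℝ) (hx : Nice x) (w : ℝ) (hw : Nice w) :
    cfDigit (k + m) (pc m x w) = cfDigit k w := by
  unfold cfDigit
  rw [Function.iterate_add_apply, pc_iterate m x hx w hw]

lemma pc_contract (n : ℕ) (x : ℝ) (hx : Nice x) (u v : ℝ)
    (hu : Nice u) (hv : Nice v) :
    |pc (2*n) x u - pc (2*n) x v| ≤ (1/2:ℝ)^n * |u - v| := by
  induction n generalizing x with
  | zero => simp [pc]
  | succ n ih =>
      have hx1 : Nice (gaussT x) := nice_gauss x hx
      have hx2 : Nice (gaussT (gaussT x)) := nice_gauss _ hx1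
      have hU := pc_nice (2*n) _ hx2 u hu
      have hV := pc_nice (2*n) _ hx2 v hv
      have h2 : 2*(n+1) = (2*n) + 1 + 1 := by ring
      rw [h2]
      show |gfun (cfDigit 0 x) (pc (2*n+1) (gaussT x) u)
          - gfun (cfDigit 0 x) (pc (2*n+1) (gaussT x) v)| ≤ _
      show |gfun (cfDigit 0 x) (gfun (cfDigit 0 (gaussT x)) (pc (2*n) (gaussT (gaussT x)) u))
          - gfun (cfDigit 0 x) (gfun (cfDigit 0 (gaussT x)) (pc (2*n) (gaussT (gaussT x)) v))| ≤ _
      calc _ ≤ |pc (2*n) (gaussT (gaussT x)) u - pc (2*n) (gaussT (gaussT x)) v| / 2 :=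
              two_step_contract _ _ (nice_digit0 x hx) (nice_digit0 _ hx1) _ _ hU.1 hV.1
        _ ≤ ((1/2:ℝ)^n * |u - v|) / 2 := by
              have := ih (gaussT (gaussT x)) hx2
              linarith
        _ = (1/2:ℝ)^(n+1) * |u - v| := by ring
lemma pc_count (m : ℕ) (x : ℝ) (hx : Nice x) (y : ℝ) (hy : Nice y) (i : ℤ)
    (n : ℕ) (hmn : m ≤ n) :
    ((Finset.range n).filter (fun k => cfDigit k (pc m x y) = i)).card
      = ((Finset.range m).filter (fun k => cfDigit k (pc m x y) = i)).card
        + ((Finset.range (n-m)).filter (fun k => cfDigit k y = i)).card := by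
  have hsplit : Finset.range n = Finset.range m ∪ Finset.Ico m n := by
    rw [Finset.range_eq_Ico, Finset.range_eq_Ico,
      Finset.Ico_union_Ico_eq_Ico (Nat.zero_le m) hmn]
  have hdisj : Disjoint ((Finset.range m).filter (fun k => cfDigit k (pc m x y) = i))
      ((Finset.Ico m n).filter (fun k => cfDigit k (pc m x y) = i)) := by
    apply Finset.disjoint_filter_filter
    rw [Finset.range_eq_Ico]
    exact Finset.Ico_disjoint_Ico_consecutive 0 m n
  rw [hsplit, Finset.filter_union, Finset.card_union_of_disjoint hdisj]
  congr 1
  have himg : (Finset.Ico m n).filter (fun k => cfDigit k (pc m x y) = i)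
      = ((Finset.range (n-m)).filter (fun k => cfDigit k y = i)).image (fun k => k + m) := by
    ext j
    simp only [Finset.mem_filter, Finset.mem_Ico, Finset.mem_image, Finset.mem_range]
    constructor
    · rintro ⟨⟨hjm, hjn⟩, hp⟩
      refine ⟨j - m, ⟨?_, ?_⟩, ?_⟩
      · exact Nat.sub_lt_sub_right hjm hjn
      · rw [← pc_digit m (j - m) x hx y hy, Nat.sub_add_cancel hjm]; exact hp
      · exact Nat.sub_add_cancel hjm
    · rintro ⟨k, ⟨hk, hq⟩, rfl⟩
      refine ⟨⟨Nat.le_add_left m k, ?_⟩, ?_⟩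
      · omega
      · rw [pc_digit m k x hx y hy]; exact hq
  rw [himg, Finset.card_image_of_injective _ (add_left_injective m)]
lemma pc_mem_freq (m : ℕ) (x : ℝ) (hx : Nice x) (y : ℝ) (η : ℕ+ → ℝ)
    (hy : y ∈ cfFreqSet η) : pc m x y ∈ cfFreqSet η := by
  obtain ⟨hy01, hyirr, hyfreq⟩ := hy
  have hyn : Nice y := ⟨hy01, hyirr⟩
  have hz := pc_nice m x hx y hyn
  refine ⟨hz.1, hz.2, fun i => ?_⟩
  set z := pc m x y with hzdef
  set i' : ℤ := ((i : ℕ) : ℤ)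
  set A : ℕ := ((Finset.range m).filter (fun k => cfDigit k z = i')).card with hA
  set cy : ℕ → ℝ := fun n => (((Finset.range n).filter (fun k => cfDigit k y = i')).card : ℝ)
    with hcy
  have h1 : Tendsto (fun n => cy n / n) atTop (nhds (η i)) := hyfreq i
  have t1 : Tendsto (fun n : ℕ => (A : ℝ) / n) atTop (nhds 0) :=
    tendsto_const_div_atTop_nhds_zero_nat (A : ℝ)
  have t2 : Tendsto (fun n : ℕ => cy (n - m) / ((n - m : ℕ) : ℝ)) atTop (nhds (η i)) :=
    h1.comp (tendsto_sub_atTop_nat m)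
  have t3 : Tendsto (fun n : ℕ => ((n : ℝ) - m) / n) atTop (nhds 1) := by
    have he : ∀ᶠ n : ℕ in atTop, (1 : ℝ) - (m : ℝ) / n = ((n : ℝ) - m) / n := by
      filter_upwards [eventually_ge_atTop 1] with n hn
      have hn0 : (n : ℝ) ≠ 0 := Nat.cast_ne_zero.2 (by omega)
      field_simp
    have hsub : Tendsto (fun n : ℕ => (1:ℝ) - (m:ℝ)/n) atTop (nhds ((1:ℝ) - 0)) :=
      Tendsto.sub tendsto_const_nhds (tendsto_const_div_atTop_nhds_zero_nat (m:ℝ))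
    exact Tendsto.congr' he (by simpa using hsub)
  have tmain : Tendsto (fun n : ℕ =>
      (A : ℝ) / n + cy (n - m) / ((n - m : ℕ) : ℝ) * (((n : ℝ) - m) / n))
      atTop (nhds (η i)) := by
    have := t1.add (t2.mul t3)
    simpa using this
  apply Tendsto.congr' _ tmain
  filter_upwards [eventually_ge_atTop (m + 1)] with n hn
  have hmn : m ≤ n := by omega
  have hcount := pc_count m x hx y hyn i' n hmn
  have hcast : ((n - m : ℕ) : ℝ) = (n : ℝ) - m := by
    rw [Nat.cast_sub hmn]
  have hn0 : (n : ℝ) ≠ 0 := Nat.cast_ne_zero.2 (by omega)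
  have hnm0 : (n : ℝ) - (m : ℝ) ≠ 0 := by
    have : (m : ℝ) + 1 ≤ (n : ℝ) := by exact_mod_cast hn
    linarith
  rw [hcast]
  rw [hcount]
  push_cast
  field_simp
  rfl

/-- The dimension function `H_G` for the continued fraction expansion is
constant on each set `F(η)`, and on any neighbourhood of any quasinormal number it already
attains all of its possible values. -/
theorem HG_constant_on_freq_sets_and_locally_full_range
    (γ : ℕ+ → ℕ → ℝ) (hγpos : ∀ i j, 0 < γ i j)
    (hγsum : ∃ B : ℝ, ∀ i, Summable (fun j => γ i j) ∧ ∑' j, γ i j ≤ B)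
    (hγsup : ∃ C : ℝ, C < 1 ∧ ∀ i j, γ i j ≤ C)
    (θ : ℝ)
    (hθ : θ = sInf {t : ℝ | 0 < t ∧
      ∃ B : ℝ, ∀ i, Summable (fun j => γ i j ^ t) ∧ ∑' j, γ i j ^ t ≤ B})
    (hbound : ∀ t : ℝ, θ < t → ∃ M : ℝ, ∀ i,
      Summable (fun j => γ i j ^ t) ∧ |Real.log (∑' j, γ i j ^ t)| ≤ M)
    (hzero : ∀ η : ℕ+ → ℝ, cfStochastic η →
      ∃! t : ℝ, t ∈ Set.Ioi θ ∧ ∑' i : ℕ+, η i * Real.log (∑' j, γ i j ^ t) = 0)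
    (Q : Set ℝ)
    (hQ : Q = {x | ∃ η : ℕ+ → ℝ, cfStochastic η ∧ x ∈ cfFreqSet η})
    (H : ℝ → ℝ)
    (hH : ∀ η : ℕ+ → ℝ, cfStochastic η → ∀ x ∈ cfFreqSet η,
      θ < H x ∧ ∑' i : ℕ+, η i * Real.log (∑' j, γ i j ^ (H x)) = 0) :
    (∀ η : ℕ+ → ℝ, cfStochastic η →
      ∀ x ∈ cfFreqSet η, ∀ y ∈ cfFreqSet η, H x = H y) ∧
    (∀ x ∈ Q, ∀ ε : ℝ, 0 < ε →
      H '' (Q ∩ Set.Ioo (x - ε) (x + ε)) = H '' Q) := by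
  have key : ∀ η : ℕ+ → ℝ, cfStochastic η →
      ∀ x ∈ cfFreqSet η, ∀ y ∈ cfFreqSet η, H x = H y := by
    intro η hη x hx y hy
    obtain ⟨t, _, huniq⟩ := hzero η hη
    have hx' := hH η hη x hx
    have hy' := hH η hη y hy
    rw [huniq (H x) ⟨Set.mem_Ioi.2 hx'.1, hx'.2⟩, huniq (H y) ⟨Set.mem_Ioi.2 hy'.1, hy'.2⟩]
  refine ⟨key, ?_⟩
  intro x hxQ ε hε
  apply Set.Subset.antisymm
  · exact Set.image_mono (f := H) Set.inter_subset_left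
  · rintro v ⟨y, hyQ, rfl⟩
    rw [hQ] at hxQ hyQ
    obtain ⟨ηx, hηx, hxF⟩ := hxQ
    obtain ⟨ηy, hηy, hyF⟩ := hyQ
    have hxn : Nice x := ⟨hxF.1, hxF.2.1⟩
    have hyn : Nice y := ⟨hyF.1, hyF.2.1⟩
    obtain ⟨n, hnε⟩ := exists_pow_lt_of_lt_one hε (show (1/2:ℝ) < 1 by norm_num)
    set z := pc (2*n) x y with hzdef
    have hzF : z ∈ cfFreqSet ηy := pc_mem_freq (2*n) x hxn y ηy hyF
    have hzQ : z ∈ Q := by rw [hQ]; exact ⟨ηy, hηy, hzF⟩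
    have hxv : Nice (gaussT^[2*n] x) := nice_gauss_iter x hxn (2*n)
    have hclose : |z - x| < ε := by
      have h1 := pc_contract n x hxn y (gaussT^[2*n] x) hyn hxv
      rw [pc_recover (2*n) x hxn] at h1
      have h2 : |y - gaussT^[2*n] x| ≤ 1 := by
        rw [abs_le]
        constructor <;> [linarith [hyn.1.1, hxv.1.2]; linarith [hyn.1.2, hxv.1.1]]
      have h3 : (0:ℝ) ≤ (1/2:ℝ)^n := by positivity
      calc |z - x| ≤ (1/2:ℝ)^n * |y - gaussT^[2*n] x| := h1
        _ ≤ (1/2:ℝ)^n * 1 := mul_le_mul_of_nonneg_left h2 h3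
        _ < ε := by simpa using hnε
    have hzmem : z ∈ Set.Ioo (x - ε) (x + ε) := by
      have := abs_lt.1 hclose
      exact ⟨by linarith [this.1], by linarith [this.2]⟩
    exact ⟨z, ⟨hzQ, hzmem⟩, key ηy hηy z hzF y hyF⟩
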